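/- For every n ≥ 2, Σ_{1≤i<j≤n−1} 1/(v_i v_j) + (1/(v_n − 1))·Σ_{i=1}^{n−1} 1/v_i = 1; equivalently, σ_{n−2}(v_1, v_2, …, v_{n−1}, v_n − 1) = σ_n(v_1, v_2, …, v_{n−1}, v_n − 1). -/

import Mathlib

/-- `v` is the sequence defined by `v 1 = 1`, `v 2 = 2`, and for `n ≥ 2`,
`v (n+1) = 1 + (Σ_{1≤i≤n} 1/v_i) / (1 - Σ_{1≤i<j≤n} 1/(v_i v_j))`.
These equations determine `v n` uniquely for all `n ≥ 1`. -/
def vSpec (v : ℕ → ℚ) : Prop :=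
  v 1 = 1 ∧ v 2 = 2 ∧ ∀ n, 2 ≤ n →
    v (n + 1) = 1 + (∑ i ∈ Finset.Icc 1 n, 1 / v i) /
      (1 - ∑ p ∈ (Finset.Icc 1 n ×ˢ Finset.Icc 1 n).filter (fun p => p.1 < p.2),
        1 / (v p.1 * v p.2))

/-- The `k`-th elementary symmetric polynomial of the rationals `x 0, …, x (n-1)`. -/
def esymmQ (n k : ℕ) (x : Fin n → ℚ) : ℚ :=
  ∑ s ∈ Finset.univ.powersetCard k, ∏ i ∈ s, x i

open Finset

lemma pairsplit (m : ℕ) (F : ℕ → ℕ → ℚ) :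
    ∑ p ∈ (Finset.Icc 1 (m+1) ×ˢ Finset.Icc 1 (m+1)).filter (fun p => p.1 < p.2), F p.1 p.2
    = (∑ p ∈ (Finset.Icc 1 m ×ˢ Finset.Icc 1 m).filter (fun p => p.1 < p.2), F p.1 p.2)
      + ∑ i ∈ Finset.Icc 1 m, F i (m+1) := by
  rw [Finset.sum_filter, Finset.sum_filter, Finset.sum_product, Finset.sum_product,
    ← Finset.insert_Icc_right_eq_Icc_add_one (show (1:ℕ) ≤ m+1 by omega),
    Finset.sum_insert (by simp)]
  have h0 : (∑ j ∈ insert (m+1) (Finset.Icc 1 m), if m+1 < j then F (m+1) j else 0) = 0 := by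
    apply Finset.sum_eq_zero; intro j hj
    simp only [Finset.mem_insert, Finset.mem_Icc] at hj
    rw [if_neg]; omega
  rw [h0, zero_add, ← Finset.sum_add_distrib]
  apply Finset.sum_congr rfl
  intro i hi
  simp only [Finset.mem_Icc] at hi
  rw [Finset.sum_insert (by simp), if_pos (by omega), add_comm]

lemma pc2_eq_pairs (h : ℕ → ℚ) : ∀ m : ℕ, ∑ s ∈ (Finset.Icc 1 m).powersetCard 2, ∏ i ∈ s, h i
    = ∑ p ∈ (Finset.Icc 1 m ×ˢ Finset.Icc 1 m).filter (fun p => p.1 < p.2), h p.1 * h p.2 := by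
  intro m
  induction m with
  | zero => rw [show Finset.Icc 1 0 = ∅ by simp, Finset.powersetCard_eq_empty.mpr (by simp)]; simp
  | succ m ih =>
    rw [pairsplit m (fun a b => h a * h b), ← ih, ← Finset.insert_Icc_right_eq_Icc_add_one (show (1:ℕ) ≤ m+1 by omega)]
    have hnm : (m+1) ∉ Finset.Icc 1 m := by simp
    rw [show (2:ℕ) = Nat.succ 1 from rfl, Finset.powersetCard_succ_insert hnm,
      Finset.sum_union, Finset.sum_image]
    · congr 1
      rw [Finset.powersetCard_one, Finset.sum_map]
      apply Finset.sum_congr rfl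
      intro i hi
      have hin : i ∈ Finset.Icc 1 m := hi
      have : (m+1) ∉ ({i} : Finset ℕ) := by
        simp only [Finset.mem_Icc] at hin
        simp; omega
      rw [Function.Embedding.coeFn_mk, Finset.prod_insert this, Finset.prod_singleton, mul_comm]
    · intro t1 ht1 t2 ht2 heq
      have h1 : (m+1) ∉ t1 := fun hc => hnm ((Finset.mem_powersetCard.mp ht1).1 hc)
      have h2 : (m+1) ∉ t2 := fun hc => hnm ((Finset.mem_powersetCard.mp ht2).1 hc)
      rw [← Finset.erase_insert h1, ← Finset.erase_insert h2, heq]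
    · rw [Finset.disjoint_left]
      intro t ht htimg
      have h1 : (m+1) ∉ t := fun hc => hnm ((Finset.mem_powersetCard.mp ht).1 hc)
      obtain ⟨u, hu, rfl⟩ := Finset.mem_image.mp htimg
      exact h1 (Finset.mem_insert_self _ _)

lemma key (v : ℕ → ℚ) (hv : vSpec v) : ∀ n, 2 ≤ n →
    (∀ i, 1 ≤ i → i ≤ n → 0 < v i) ∧ 1 < v n ∧
    (1 - ∑ p ∈ (Finset.Icc 1 n ×ˢ Finset.Icc 1 n).filter (fun p => p.1 < p.2),
        1 / (v p.1 * v p.2)) = (∏ i ∈ Finset.Icc 1 n, v i)⁻¹ := by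
  obtain ⟨h1, h2, hrec⟩ := hv
  intro n
  induction n with
  | zero => omega
  | succ m ih =>
    intro hm
    rcases Nat.lt_or_ge m 2 with hm2 | hm2
    · have hm1 : m = 1 := by omega
      subst hm1
      refine ⟨?_, by rw [h2]; norm_num, ?_⟩
      · intro i hi1 hi2; interval_cases i
        · rw [h1]; norm_num
        · rw [h2]; norm_num
      · have hfilt : ((Finset.Icc 1 2 ×ˢ Finset.Icc 1 2).filter (fun p => p.1 < p.2))
            = {((1:ℕ),(2:ℕ))} := by decide
        rw [hfilt, Finset.sum_singleton, show Finset.Icc 1 2 = {1, 2} by decide,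
          Finset.prod_insert (by decide), Finset.prod_singleton, h1, h2]
        norm_num
    · obtain ⟨hpos, hgt, hinv⟩ := ih hm2
      set P := ∏ i ∈ Finset.Icc 1 m, v i with hP
      have hPpos : 0 < P := Finset.prod_pos (fun i hi => by
        simp only [Finset.mem_Icc] at hi; exact hpos i hi.1 hi.2)
      have hS1pos : 0 < ∑ i ∈ Finset.Icc 1 m, 1 / v i := by
        apply Finset.sum_pos
        · intro i hi; simp only [Finset.mem_Icc] at hi
          exact div_pos one_pos (hpos i hi.1 hi.2)
        · exact ⟨1, by simp; omega⟩
      set S1 := ∑ i ∈ Finset.Icc 1 m, 1 / v i with hS1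
      have hv1 : v (m + 1) = 1 + S1 * P := by
        rw [hrec m hm2, hinv, div_inv_eq_mul, hS1]
      have hgt' : 1 < v (m + 1) := by
        rw [hv1]; nlinarith
      have hvm1pos : 0 < v (m+1) := by linarith
      refine ⟨?_, hgt', ?_⟩
      · intro i hi1 hi2
        rcases Nat.lt_or_ge i (m+1) with h | h
        · exact hpos i hi1 (by omega)
        · have : i = m + 1 := by omega
          subst this; exact hvm1pos
      · rw [pairsplit m (fun a b => 1 / (v a * v b)),
          ← Finset.insert_Icc_right_eq_Icc_add_one (show (1:ℕ) ≤ m+1 by omega),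
          Finset.prod_insert (by simp)]
        have hsum : (∑ i ∈ Finset.Icc 1 m, 1 / (v i * v (m+1)))
            = S1 * (v (m+1))⁻¹ := by
          rw [hS1, Finset.sum_mul]
          apply Finset.sum_congr rfl
          intro i _
          rw [div_mul_eq_div_div, div_eq_mul_inv]
        rw [hsum]
        have h2' : 1 - (∑ p ∈ (Finset.Icc 1 m ×ˢ Finset.Icc 1 m).filter (fun p => p.1 < p.2),
            1 / (v p.1 * v p.2)) = P⁻¹ := hinv
        have hPne : P ≠ 0 := ne_of_gt hPpos
        have hvne : v (m+1) ≠ 0 := ne_of_gt hvm1pos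
        have expand : 1 - ((∑ p ∈ (Finset.Icc 1 m ×ˢ Finset.Icc 1 m).filter (fun p => p.1 < p.2),
            1 / (v p.1 * v p.2)) + S1 * (v (m+1))⁻¹) = P⁻¹ - S1 * (v (m+1))⁻¹ := by
          rw [← h2']; ring
        rw [expand, hv1, ← hP]
        field_simp
        ring

lemma part1 (v : ℕ → ℚ) (hv : vSpec v) (n : ℕ) (hn : 2 ≤ n) :
    (∑ p ∈ (Finset.Icc 1 (n - 1) ×ˢ Finset.Icc 1 (n - 1)).filter (fun p => p.1 < p.2),
        1 / (v p.1 * v p.2)) +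
      (1 / (v n - 1)) * ∑ i ∈ Finset.Icc 1 (n - 1), 1 / v i = 1 := by
  obtain ⟨h1, h2, hrec⟩ := hv
  rcases Nat.lt_or_ge n 3 with h3 | h3
  · have : n = 2 := by omega
    subst this
    have hfilt : ((Finset.Icc 1 1 ×ˢ Finset.Icc 1 1).filter (fun p => (p.1 : ℕ) < p.2))
        = (∅ : Finset (ℕ × ℕ)) := by decide
    simp only [show (2:ℕ) - 1 = 1 from rfl, hfilt, Finset.sum_empty, zero_add]
    rw [show Finset.Icc 1 1 = {1} by decide, Finset.sum_singleton, h1, h2]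
    norm_num
  · obtain ⟨m, rfl⟩ : ∃ m, n = m + 1 := ⟨n - 1, by omega⟩
    have hm2 : 2 ≤ m := by omega
    obtain ⟨hpos, hgt, hinv⟩ := key v ⟨h1, h2, hrec⟩ m hm2
    simp only [Nat.add_sub_cancel]
    set P := ∏ i ∈ Finset.Icc 1 m, v i with hP
    have hPpos : 0 < P := Finset.prod_pos (fun i hi => by
      simp only [Finset.mem_Icc] at hi; exact hpos i hi.1 hi.2)
    set S1 := ∑ i ∈ Finset.Icc 1 m, 1 / v i with hS1
    have hS1pos : 0 < S1 := by
      apply Finset.sum_pos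
      · intro i hi; simp only [Finset.mem_Icc] at hi
        exact div_pos one_pos (hpos i hi.1 hi.2)
      · exact ⟨1, by simp; omega⟩
    have hv1 : v (m + 1) = 1 + S1 * P := by
      rw [hrec m hm2, hinv, div_inv_eq_mul, hS1]
    have hterm : (1 / (v (m+1) - 1)) * S1 = P⁻¹ := by
      rw [hv1]
      field_simp
      ring
    rw [hterm, ← hinv]
    ring

lemma esymm_reindex (n k : ℕ) (G : ℕ → ℚ) :
    esymmQ n k (fun i : Fin n => G ((i:ℕ)+1))
      = ∑ s ∈ (Finset.Icc 1 n).powersetCard k, ∏ i ∈ s, G i := by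
  classical
  let e : Fin n ↪ ℕ := ⟨fun i => (i:ℕ)+1, fun a b h => Fin.ext (by simpa using h)⟩
  have hmap : (Finset.univ : Finset (Fin n)).map e = Finset.Icc 1 n := by
    ext j
    simp only [Finset.mem_map, Finset.mem_univ, true_and, Finset.mem_Icc]
    constructor
    · rintro ⟨i, rfl⟩
      show 1 ≤ (i:ℕ)+1 ∧ (i:ℕ)+1 ≤ n
      have := i.isLt
      omega
    · rintro ⟨hj1, hj2⟩
      exact ⟨⟨j-1, by omega⟩, by show j - 1 + 1 = j; omega⟩
  rw [esymmQ, ← hmap, Finset.powersetCard_map, Finset.sum_map]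
  apply Finset.sum_congr rfl
  intro s _
  have h2 : ∏ j ∈ s.map e, G j = ∏ i ∈ s, G ((i:ℕ)+1) := by
    rw [Finset.prod_map]; rfl
  exact h2.symm

lemma compl_step (n : ℕ) (hn : 2 ≤ n) (G : ℕ → ℚ)
    (hG : ∀ i ∈ Finset.Icc 1 n, G i ≠ 0) :
    ∑ s ∈ (Finset.Icc 1 n).powersetCard (n-2), ∏ i ∈ s, G i
      = (∏ i ∈ Finset.Icc 1 n, G i) *
          ∑ t ∈ (Finset.Icc 1 n).powersetCard 2, ∏ i ∈ t, (G i)⁻¹ := by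
  classical
  set T := Finset.Icc 1 n with hT
  have hcard : T.card = n := by rw [hT, Nat.card_Icc]; omega
  rw [Finset.mul_sum]
  apply Finset.sum_nbij' (i := fun s => T \ s) (j := fun t => T \ t)
  · intro s hs
    obtain ⟨hsub, hc⟩ := Finset.mem_powersetCard.mp hs
    exact Finset.mem_powersetCard.mpr ⟨Finset.sdiff_subset, by
      rw [Finset.card_sdiff_of_subset hsub, hcard, hc]; omega⟩
  · intro t ht
    obtain ⟨hsub, hc⟩ := Finset.mem_powersetCard.mp ht
    exact Finset.mem_powersetCard.mpr ⟨Finset.sdiff_subset, by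
      rw [Finset.card_sdiff_of_subset hsub, hcard, hc]⟩
  · intro s hs
    obtain ⟨hsub, _⟩ := Finset.mem_powersetCard.mp hs
    rw [Finset.sdiff_sdiff_self_left, Finset.inter_eq_right.mpr hsub]
  · intro t ht
    obtain ⟨hsub, _⟩ := Finset.mem_powersetCard.mp ht
    rw [Finset.sdiff_sdiff_self_left, Finset.inter_eq_right.mpr hsub]
  · intro s hs
    obtain ⟨hsub, _⟩ := Finset.mem_powersetCard.mp hs
    have hprod : (∏ i ∈ T \ s, G i) * ∏ i ∈ s, G i = ∏ i ∈ T, G i :=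
      Finset.prod_sdiff hsub
    have hne : (∏ i ∈ T \ s, G i) ≠ 0 :=
      Finset.prod_ne_zero_iff.mpr (fun i hi => hG i (Finset.sdiff_subset hi))
    rw [Finset.prod_inv_distrib, ← hprod]
    field_simp

/-- For every `n ≥ 2`,
`Σ_{1≤i<j≤n−1} 1/(v_i v_j) + (1/(v_n − 1))·Σ_{i=1}^{n−1} 1/v_i = 1`; equivalently,
`σ_{n−2}(v_1,…,v_{n−1},v_n − 1) = σ_n(v_1,…,v_{n−1},v_n − 1)`. -/
theorem stmt19 (v : ℕ → ℚ) (hv : vSpec v) (n : ℕ) (hn : 2 ≤ n) :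
    (∑ p ∈ (Finset.Icc 1 (n - 1) ×ˢ Finset.Icc 1 (n - 1)).filter (fun p => p.1 < p.2),
        1 / (v p.1 * v p.2)) +
      (1 / (v n - 1)) * ∑ i ∈ Finset.Icc 1 (n - 1), 1 / v i = 1 ∧
    esymmQ n (n - 2) (fun i : Fin n => if (i : ℕ) + 1 = n then v n - 1 else v ((i : ℕ) + 1)) =
      esymmQ n n (fun i : Fin n => if (i : ℕ) + 1 = n then v n - 1 else v ((i : ℕ) + 1)) := by
  have hp1 := part1 v hv n hn
  refine ⟨hp1, ?_⟩
  obtain ⟨hpos, hgt, _⟩ := key v hv n hn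
  set G : ℕ → ℚ := fun k => if k = n then v n - 1 else v k with hG
  have hx : (fun i : Fin n => if (i:ℕ)+1 = n then v n - 1 else v ((i:ℕ)+1))
      = (fun i : Fin n => G ((i:ℕ)+1)) := rfl
  rw [hx, esymm_reindex, esymm_reindex]
  have hGne : ∀ i ∈ Finset.Icc 1 n, G i ≠ 0 := by
    intro i hi
    simp only [Finset.mem_Icc] at hi
    by_cases h : i = n
    · simp only [hG, if_pos h]; intro hc; linarith
    · simp only [hG, if_neg h]; exact ne_of_gt (hpos i hi.1 (by omega))
  have hcard : (Finset.Icc 1 n).card = n := by rw [Nat.card_Icc]; omega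
  have hrhs : ∑ s ∈ (Finset.Icc 1 n).powersetCard n, ∏ i ∈ s, G i
      = ∏ i ∈ Finset.Icc 1 n, G i := by
    have hps := Finset.powersetCard_self (Finset.Icc 1 n)
    rw [hcard] at hps
    rw [hps, Finset.sum_singleton]
  rw [hrhs, compl_step n hn G hGne, pc2_eq_pairs (fun i => (G i)⁻¹) n]
  obtain ⟨m, rfl⟩ : ∃ m, n = m + 1 := ⟨n - 1, by omega⟩
  rw [pairsplit m (fun a b => (G a)⁻¹ * (G b)⁻¹)]
  simp only [Nat.add_sub_cancel] at hp1
  have hA : (∑ p ∈ (Finset.Icc 1 m ×ˢ Finset.Icc 1 m).filter (fun p => p.1 < p.2),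
      (G p.1)⁻¹ * (G p.2)⁻¹)
      = ∑ p ∈ (Finset.Icc 1 m ×ˢ Finset.Icc 1 m).filter (fun p => p.1 < p.2),
        1 / (v p.1 * v p.2) := by
    apply Finset.sum_congr rfl
    intro p hp
    simp only [Finset.mem_filter, Finset.mem_product, Finset.mem_Icc] at hp
    have h1 : G p.1 = v p.1 := by simp only [hG]; rw [if_neg (by omega)]
    have h2 : G p.2 = v p.2 := by simp only [hG]; rw [if_neg (by omega)]
    rw [h1, h2, ← mul_inv, one_div]
  have hB : (∑ i ∈ Finset.Icc 1 m, (G i)⁻¹ * (G (m+1))⁻¹)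
      = (1 / (v (m+1) - 1)) * ∑ i ∈ Finset.Icc 1 m, 1 / v i := by
    have hGn : G (m+1) = v (m+1) - 1 := by simp [hG]
    rw [Finset.mul_sum]
    apply Finset.sum_congr rfl
    intro i hi
    simp only [Finset.mem_Icc] at hi
    have h1 : G i = v i := by simp only [hG]; rw [if_neg (by omega)]
    rw [h1, hGn, one_div, one_div, mul_comm]
  rw [hA, hB, hp1, mul_one]
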